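/- arXiv:1611.05543 — 7 statements merged into one kernel-verified Lean document; each statement's English description precedes it below -/
import Mathlib

section
/- For every integer N ≥ 7, the partial sum of the Poisson distribution with parameter 2N up to N−1 satisfies ∑_{m=0}^{N-1} (2N)^m e^{-2N} / m! ≤ 1/64. -/
open Real Finset

-- e^1 lower bound numeric helper: 14^6 * 896 ≤ 5760 * (2.7182818283)^14
lemma numeric_base : (14:ℝ)^6 * 896 ≤ 5760 * (2.7182818283 : ℝ)^14 := by
  norm_num

lemma exp_pow_ge : (2.7182818283 : ℝ)^14 ≤ Real.exp 1 ^ 14 := by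
  exact pow_le_pow_left₀ (by norm_num) (le_of_lt Real.exp_one_gt_d9) 14

-- key: for n = k+7, t(n) := (2n)^(n-1) e^{-2n}/(n-1)! ≤ (n+1)/(128 n)
lemma key (k : ℕ) :
    (2*(k+7):ℝ)^(k+6) * Real.exp (-(2*(k+7):ℝ)) / ((k+6).factorial) ≤ (k+8)/(128*(k+7)) := by
  induction k with
  | zero =>
    have h6 : ((0+6 : ℕ).factorial : ℝ) = 720 := by norm_num [Nat.factorial]
    rw [h6]
    have he : Real.exp (-(2*((0:ℕ)+7):ℝ)) = 1 / Real.exp 1 ^ 14 := by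
      rw [Real.exp_one_pow, one_div, ← Real.exp_neg]
      norm_num
    rw [he]
    have hp : (0:ℝ) < Real.exp 1 ^ 14 := pow_pos (Real.exp_pos 1) 14
    rw [div_le_div_iff₀ (by positivity) (by norm_num)]
    have hbig : (14:ℝ)^6 * 896 ≤ 5760 * Real.exp 1 ^ 14 :=
      numeric_base.trans (by nlinarith [exp_pow_ge])
    push_cast
    norm_num
    rw [Real.exp_one_pow] at hbig
    have hp14 : (0:ℝ) < Real.exp 14 := Real.exp_pos 14
    have hinv : (Real.exp 14)⁻¹ * (Real.exp 14) = 1 := inv_mul_cancel₀ (ne_of_gt hp14)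
    nlinarith [hbig, hp14, hinv,
      mul_le_mul_of_nonneg_right hbig (le_of_lt (by positivity : (0:ℝ) < (Real.exp 14)⁻¹))]
  | succ k ih =>
    set n : ℝ := (k:ℝ) + 7 with hn
    have hn0 : (0:ℝ) < n := by positivity
    have hfact : ((k+1+6 : ℕ).factorial : ℝ) = (n) * ((k+6).factorial : ℝ) := by
      have : k+1+6 = (k+6)+1 := by ring
      rw [this, Nat.factorial_succ]
      push_cast [hn]
      ring
    have hF : (0:ℝ) < ((k+6).factorial : ℝ) := by positivity
    -- equality decomposition
    have hexp : Real.exp (-(2*((k:ℝ)+1+7))) = Real.exp (-(2*n)) * Real.exp (-2) := by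
      rw [← Real.exp_add]; congr 1; rw [hn]; ring
    have hEq : (2*((k:ℝ)+1+7))^(k+1+6) * Real.exp (-(2*((k:ℝ)+1+7))) / ((k+1+6).factorial)
        = ((2*n)^(k+6) * Real.exp (-(2*n)) / ((k+6).factorial))
          * (2 * ((n+1)/n)^(k+7) * Real.exp (-2)) := by
      rw [hexp, hfact]
      have h1 : ((k:ℝ)+1+7) = n + 1 := by rw [hn]; ring
      rw [h1]
      have h2 : k+1+6 = (k+6)+1 := by ring
      rw [h2]
      rw [div_pow, mul_pow, mul_pow]
      field_simp
      ring
    -- bound the ratio factor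
    have hratio : ((n+1)/n)^(k+7) ≤ Real.exp 1 := by
      have h1 : (n+1)/n = 1 + 1/n := by field_simp
      have h2 : 1 + 1/n ≤ Real.exp (1/n) := by
        have := Real.add_one_le_exp (1/n); linarith
      have h3 : ((n+1)/n)^(k+7) ≤ Real.exp (1/n) ^ (k+7) := by
        apply pow_le_pow_left₀ (by positivity) (h1 ▸ h2)
      have h4 : Real.exp (1/n) ^ (k+7) = Real.exp ((k+7)/n) := by
        rw [← Real.exp_nat_mul]; congr 1; push_cast; ring
      have h5 : ((k:ℝ)+7)/n = 1 := by rw [hn]; field_simp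
      rw [h4] at h3; rw [h5] at h3; simpa using h3
    have hterm_pos : (0:ℝ) ≤ (2*n)^(k+6) * Real.exp (-(2*n)) / ((k+6).factorial) := by positivity
    have hfac_pos : (0:ℝ) ≤ 2 * ((n+1)/n)^(k+7) * Real.exp (-2) := by positivity
    have step1 : ((2*n)^(k+6) * Real.exp (-(2*n)) / ((k+6).factorial))
          * (2 * ((n+1)/n)^(k+7) * Real.exp (-2))
        ≤ (((k:ℝ)+8)/(128*n)) * (2 * Real.exp 1 * Real.exp (-2)) := by
      apply mul_le_mul _ _ hfac_pos (by positivity)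
      · have := ih
        push_cast at this ⊢
        convert this using 3 <;> rw [hn]
      · have : Real.exp (-2) > 0 := Real.exp_pos _
        nlinarith [Real.exp_pos (-2), hratio]
    push_cast
    refine le_trans (hEq ▸ step1) ?_
    -- final algebra: (k+8)/(128 n) * 2 e^{-1} ≤ (k+9)/(128(n+1))
    have hee : Real.exp 1 * Real.exp (-2) = (Real.exp 1)⁻¹ := by
      rw [← Real.exp_add, ← Real.exp_neg]; norm_num
    have he1 : (2.7182818283 : ℝ) ≤ Real.exp 1 := le_of_lt Real.exp_one_gt_d9
    have hepos : (0:ℝ) < Real.exp 1 := Real.exp_pos 1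
    have hn7 : (7:ℝ) ≤ n := by rw [hn]; linarith [Nat.cast_nonneg (α := ℝ) k]
    have key2 : 2 * (n+1)^2 ≤ Real.exp 1 * (n * (n+2)) := by
      nlinarith [he1, hn7, mul_pos hn0 (by linarith : (0:ℝ) < n+2)]
    rw [mul_assoc, hee]
    have hgoal : (((k:ℝ)+8)/(128*n)) * (2 * (Real.exp 1)⁻¹) ≤ ((k:ℝ)+1+8)/(128*((k:ℝ)+1+7)) := by
      have hkn : (k:ℝ)+8 = n+1 := by rw [hn]; ring
      have hkn2 : (k:ℝ)+1+8 = n+2 := by rw [hn]; ring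
      have hkn3 : (k:ℝ)+1+7 = n+1 := by rw [hn]; ring
      rw [hkn, hkn2, hkn3]
      rw [div_mul_eq_mul_div, div_le_div_iff₀ (by positivity) (by positivity)]
      have hinv : (Real.exp 1)⁻¹ * Real.exp 1 = 1 := inv_mul_cancel₀ (ne_of_gt hepos)
      have hinvpos : (0:ℝ) ≤ (Real.exp 1)⁻¹ := by positivity
      have h2 : 2*(Real.exp 1)⁻¹*(n+1)^2 ≤ n*(n+2) := by
        calc 2*(Real.exp 1)⁻¹*(n+1)^2 = (Real.exp 1)⁻¹ * (2*(n+1)^2) := by ring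
          _ ≤ (Real.exp 1)⁻¹ * (Real.exp 1 * (n*(n+2))) :=
              mul_le_mul_of_nonneg_left key2 hinvpos
          _ = n*(n+2) := by rw [← mul_assoc, hinv, one_mul]
      nlinarith [h2]
    exact hgoal

theorem poisson_tail_bound (N : ℕ) (hN : 7 ≤ N) :
    ∑ m ∈ Finset.range N, (2 * N : ℝ) ^ m * Real.exp (-(2 * N : ℝ)) / (Nat.factorial m) ≤ 1 / 64 := by
  obtain ⟨k, rfl⟩ : ∃ k, N = k + 7 := ⟨N - 7, by omega⟩
  set n : ℝ := ((k + 7 : ℕ) : ℝ) with hn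
  have hn7 : (7:ℝ) ≤ n := by
    rw [hn]; push_cast; linarith [Nat.cast_nonneg (α := ℝ) k]
  have hn0 : (0:ℝ) < n := by linarith
  set E : ℝ := Real.exp (-(2*n)) with hE
  have hE0 : (0:ℝ) < E := Real.exp_pos _
  set q : ℝ := (n-1)/(2*n) with hq
  have hq0 : (0:ℝ) ≤ q := by rw [hq]; apply div_nonneg <;> linarith
  have hq1 : q < 1 := by rw [hq, div_lt_one (by linarith)]; linarith
  set T : ℝ := (2*n)^(k+6) * E / ((k+6).factorial : ℝ) with hT
  have hT0 : (0:ℝ) ≤ T := by rw [hT]; positivity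
  have hstep : ∀ j, j < k+7 →
      (2*n)^(k+7-1-j) * E / (((k+7-1-j).factorial : ℝ)) ≤ T * q^j := by
    intro j
    induction j with
    | zero =>
      intro _
      norm_num [show k+7-1-0 = k+6 from by omega, hT]
    | succ j ihj =>
      intro hj
      have ihj' := ihj (by omega)
      have hm1 : (k+7-1-(j+1)) + 1 = k+7-1-j := by omega
      set m := k+7-1-(j+1) with hm
      rw [← hm1] at ihj'
      have hm2 : (m:ℝ)+1 ≤ n - 1 := by
        have h1 : m+1 ≤ k+6 := by omega
        have h2 : ((m:ℝ)+1) ≤ ((k:ℝ)+6) := by exact_mod_cast Nat.cast_le.mpr h1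
        rw [hn]; push_cast; linarith
      have hmf : (0:ℝ) < ((m.factorial : ℕ) : ℝ) := by positivity
      have e1 : (2*n)^m * E / (m.factorial : ℝ)
          = ((2*n)^(m+1) * E / (((m+1).factorial : ℝ))) * (((m:ℝ)+1)/(2*n)) := by
        rw [Nat.factorial_succ, pow_succ]
        push_cast
        field_simp
      calc (2*n)^m * E / (m.factorial : ℝ)
          = ((2*n)^(m+1) * E / (((m+1).factorial : ℝ))) * (((m:ℝ)+1)/(2*n)) := e1
        _ ≤ ((2*n)^(m+1) * E / (((m+1).factorial : ℝ))) * q := by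
            apply mul_le_mul_of_nonneg_left _ (by positivity)
            rw [hq]
            apply div_le_div_of_nonneg_right ?_ (by linarith)
            · exact hm2
        _ ≤ (T * q^j) * q := mul_le_mul_of_nonneg_right ihj' hq0
        _ = T * q^(j+1) := by rw [pow_succ]; ring
  rw [← Finset.sum_range_reflect]
  have h1 : ∑ j ∈ range (k+7), (2*n)^(k+7-1-j) * E / (((k+7-1-j).factorial : ℝ))
      ≤ ∑ j ∈ range (k+7), T * q^j :=
    Finset.sum_le_sum (fun j hj => hstep j (Finset.mem_range.mp hj))
  have h3 : ∑ j ∈ range (k+7), q^j ≤ (2*n)/(n+1) := by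
    rw [geom_sum_eq (ne_of_lt hq1), div_le_iff_of_neg (by linarith : q - 1 < 0)]
    have hc : (2*n)/(n+1) * (q-1) = -1 := by
      rw [hq]; field_simp; ring
    rw [hc]
    linarith [pow_nonneg hq0 (k+7)]
  have hTkey : T ≤ (n+1)/(128*n) := by
    have hk := key k
    have hnn : n = (k:ℝ) + 7 := by rw [hn]; push_cast; ring
    rw [hT, hE, hnn]
    refine hk.trans (le_of_eq ?_)
    ring
  calc ∑ j ∈ range (k+7), (2*n)^(k+7-1-j) * E / (((k+7-1-j).factorial : ℝ))
      ≤ ∑ j ∈ range (k+7), T * q^j := h1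
    _ = T * ∑ j ∈ range (k+7), q^j := by rw [← Finset.mul_sum]
    _ ≤ T * ((2*n)/(n+1)) := mul_le_mul_of_nonneg_left h3 hT0
    _ ≤ ((n+1)/(128*n)) * ((2*n)/(n+1)) := mul_le_mul_of_nonneg_right hTkey (by positivity)
    _ = 1/64 := by field_simp; ring
end

section
/- For all real numbers α, β with α + β ≠ 0 and all real t, the matrix exponential of t·[[−α, α], [β, −β]] equals (1/(α+β)) · [[β + α·e^{−(α+β)t}, α − α·e^{−(α+β)t}], [β − β·e^{−(α+β)t}, α + β·e^{−(α+β)t}]]. -/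
open NormedSpace

theorem exp_two_by_two_rate_matrix (α β t : ℝ) (h : α + β ≠ 0) :
    exp (t • !![-α, α; β, -β]) =
      (α + β)⁻¹ •
        !![β + α * Real.exp (-(α + β) * t), α - α * Real.exp (-(α + β) * t);
           β - β * Real.exp (-(α + β) * t), α + β * Real.exp (-(α + β) * t)] := by
  set P : Matrix (Fin 2) (Fin 2) ℝ := !![1, α; 1, -β] with hP
  set Q : Matrix (Fin 2) (Fin 2) ℝ := (α + β)⁻¹ • !![β, α; 1, -1] with hQ
  have hPQ : P * Q = 1 := by
    ext i j
    fin_cases i <;> fin_cases j <;>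
      simp [hP, hQ, Matrix.mul_apply, Fin.sum_univ_two, Matrix.one_apply] <;>
      field_simp <;> ring
  have hQinv : P⁻¹ = Q := Matrix.inv_eq_right_inv hPQ
  have hUnit : IsUnit P := by
    apply (Matrix.isUnit_iff_isUnit_det P).mpr
    have : P.det = -(α + β) := by simp [hP, Matrix.det_fin_two_of]; ring
    rw [this]
    exact (neg_ne_zero.mpr h).isUnit
  set D : Matrix (Fin 2) (Fin 2) ℝ := Matrix.diagonal ![0, -(α + β) * t] with hD
  have key : t • !![-α, α; β, -β] = P * D * P⁻¹ := by
    rw [hQinv]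
    ext i j
    fin_cases i <;> fin_cases j <;>
      simp [hP, hQ, hD, Matrix.mul_apply, Fin.sum_univ_two, Matrix.diagonal, Matrix.vecHead, Matrix.vecTail] <;>
      field_simp <;> ring
  rw [key, Matrix.exp_conj P D hUnit, hD, Matrix.exp_diagonal, hQinv]
  have hexp : exp (![0, -(α + β) * t] : Fin 2 → ℝ) =
      ![1, Real.exp (-(α + β) * t)] := by
    ext i
    fin_cases i <;> simp [Pi.exp_def, ← Real.exp_eq_exp_ℝ]
  rw [hexp]
  ext i j
  fin_cases i <;> fin_cases j <;>
    simp [hP, hQ, Matrix.mul_apply, Fin.sum_univ_two, Matrix.diagonal, Matrix.vecHead, Matrix.vecTail] <;>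
    field_simp <;> ring
end

section
/- Let A be the (N+1)×(N+1) real matrix with A_{n,n} = −1 and A_{n,n+1} = 1 for 0 ≤ n ≤ N−1 and all other entries zero. Then for every real t ≥ 0 and every m with 0 ≤ m ≤ N−1, the (0,m) entry of the matrix exponential e^{tA} equals t^m e^{−t} / m!. -/
set_option maxRecDepth 8000

open NormedSpace

-- B = A + 1 has rows: row i = e_{min (i+1) N}
lemma bpow_row {N : ℕ} (B : Matrix (Fin (N + 1)) (Fin (N + 1)) ℝ)
    (hB : ∀ i j : Fin (N + 1), B i j = if (j : ℕ) = min ((i : ℕ) + 1) N then 1 else 0) :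
    ∀ (n : ℕ) (j : Fin (N + 1)),
      (B ^ n) 0 j = if (j : ℕ) = min n N then 1 else 0 := by
  intro n
  induction n with
  | zero =>
    intro j
    rw [pow_zero, Matrix.one_apply, min_eq_left (Nat.zero_le N)]
    by_cases h : (j : ℕ) = 0
    · have : (0 : Fin (N + 1)) = j := Fin.ext (by rw [h]; simp)
      rw [if_pos this, if_pos h]
    · have : ¬ (0 : Fin (N + 1)) = j := fun e => h (by rw [← e]; simp)
      rw [if_neg this, if_neg h]
  | succ n ih =>
    intro j
    have hmin : min n N < N + 1 := Nat.lt_succ_of_le (min_le_right _ _)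
    set k : Fin (N + 1) := ⟨min n N, hmin⟩ with hk
    rw [pow_succ, Matrix.mul_apply]
    have hsum : ∀ x : Fin (N + 1), (B ^ n) 0 x * B x j =
        if x = k then B k j else 0 := by
      intro x
      rw [ih x]
      by_cases hx : x = k
      · subst hx; simp [hk]
      · have : ¬ ((x : ℕ) = min n N) := by
          intro h; exact hx (Fin.ext h)
        simp [this, hx]
    rw [Finset.sum_congr rfl fun x _ => hsum x, Finset.sum_ite_eq' _ k]
    simp only [Finset.mem_univ, if_true]
    rw [hB]
    congr 1
    have h2 : (n ⊓ N + 1) ⊓ N = (n + 1) ⊓ N := by omega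
    rw [h2]

theorem exp_entry_of_bidiagonal (N : ℕ) (A : Matrix (Fin (N + 1)) (Fin (N + 1)) ℝ)
    (hA : ∀ i j : Fin (N + 1),
      A i j = if (i : ℕ) < N ∧ (j : ℕ) = (i : ℕ) then -1
        else if (i : ℕ) < N ∧ (j : ℕ) = (i : ℕ) + 1 then 1 else 0) :
    ∀ (t : ℝ), 0 ≤ t → ∀ (m : Fin (N + 1)), (m : ℕ) < N →
      (exp (t • A)) 0 m = t ^ (m : ℕ) * Real.exp (-t) / (Nat.factorial (m : ℕ)) := by
  intro t ht m hm
  letI : SeminormedRing (Matrix (Fin (N + 1)) (Fin (N + 1)) ℝ) := Matrix.linftyOpSemiNormedRing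
  letI : NormedRing (Matrix (Fin (N + 1)) (Fin (N + 1)) ℝ) := Matrix.linftyOpNormedRing
  letI : NormedAlgebra ℝ (Matrix (Fin (N + 1)) (Fin (N + 1)) ℝ) := Matrix.linftyOpNormedAlgebra
  set B : Matrix (Fin (N + 1)) (Fin (N + 1)) ℝ := A + 1 with hBdef
  have hB : ∀ i j : Fin (N + 1), B i j = if (j : ℕ) = min ((i : ℕ) + 1) N then 1 else 0 := by
    intro i j
    have hi := i.isLt
    have hj := j.isLt
    rw [hBdef, Matrix.add_apply, Matrix.one_apply, hA i j]
    rcases lt_or_ge (i : ℕ) N with h | h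
    · have h1 : min ((i : ℕ) + 1) N = (i : ℕ) + 1 := by omega
      rw [h1]
      by_cases h2 : (j : ℕ) = (i : ℕ)
      · have : i = j := Fin.ext h2.symm
        simp [h, h2, this]
      · have hne : ¬ i = j := fun hij => h2 (by rw [hij])
        by_cases h3 : (j : ℕ) = (i : ℕ) + 1 <;> simp [h, h2, h3, hne]
    · have h0 : (i : ℕ) = N := by omega
      have h1 : min ((i : ℕ) + 1) N = N := by omega
      have hniff : i = j ↔ (j : ℕ) = N := by
        rw [Fin.ext_iff, h0, eq_comm]
      rw [h1]
      simp only [not_lt.mpr h, false_and, if_false]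
      by_cases h2 : (j : ℕ) = N <;> simp [hniff, h2]
  have hsplit : t • A = (-t) • (1 : Matrix (Fin (N + 1)) (Fin (N + 1)) ℝ) + t • B := by
    rw [hBdef]
    module
  rw [hsplit, Matrix.exp_add_of_commute _ _
    (((Commute.one_left B).smul_right t).smul_left (-t))]
  have h1 : exp ((-t) • (1 : Matrix (Fin (N + 1)) (Fin (N + 1)) ℝ))
      = Real.exp (-t) • (1 : Matrix (Fin (N + 1)) (Fin (N + 1)) ℝ) := by
    have ha : (-t) • (1 : Matrix (Fin (N + 1)) (Fin (N + 1)) ℝ)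
        = algebraMap ℝ _ (-t) := by
      rw [Algebra.algebraMap_eq_smul_one]
    rw [ha, Real.exp_eq_exp_ℝ, ← Algebra.algebraMap_eq_smul_one]
    exact (algebraMap_exp_comm (-t)).symm
  rw [h1, Matrix.smul_mul, Matrix.one_mul, Matrix.smul_apply, smul_eq_mul]
  -- now compute the entry of exp (t • B)
  let e : Matrix (Fin (N + 1)) (Fin (N + 1)) ℝ →ₗ[ℝ] ℝ :=
    { toFun := fun X => X 0 m, map_add' := fun _ _ => rfl, map_smul' := fun _ _ => rfl }
  have he : Continuous e := e.continuous_of_finiteDimensional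
  have hs := exp_series_hasSum_exp' (𝕂 := ℝ) (t • B)
  have hs2 := hs.map e.toAddMonoidHom he
  have hentry : (exp (t • B)) 0 m
      = ∑' n : ℕ, ((n.factorial)⁻¹ : ℝ) * (t ^ n * ((B ^ n) 0 m)) := by
    refine hs2.tsum_eq.symm.trans ?_
    congr 1
    funext n
    show ((n.factorial)⁻¹ : ℝ) • ((t • B) ^ n) 0 m = _
    rw [smul_pow]
    simp only [Matrix.smul_apply, smul_eq_mul]
  rw [hentry]
  have hterm : ∀ n : ℕ, ((n.factorial)⁻¹ : ℝ) * (t ^ n * ((B ^ n) 0 m))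
      = if n = (m : ℕ) then ((n.factorial)⁻¹ : ℝ) * t ^ n else 0 := by
    intro n
    rw [bpow_row B hB n m]
    by_cases h : n = (m : ℕ)
    · have h2 : (m : ℕ) = min n N := by omega
      rw [if_pos h2, if_pos h, mul_one]
    · have h2 : ¬ ((m : ℕ) = min n N) := by omega
      rw [if_neg h2, if_neg h, mul_zero, mul_zero]
  rw [tsum_congr hterm, tsum_eq_single (m : ℕ) (by intro n hn; simp [hn]), if_pos rfl]
  have hfac : ((m : ℕ).factorial : ℝ) ≠ 0 := Nat.cast_ne_zero.mpr (m : ℕ).factorial_ne_zero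
  field_simp
end

section
/- Let A be the (N+1)×(N+1) real matrix with A_{n,n} = −1 and A_{n,n+1} = 1 for 0 ≤ n ≤ N−1 and all other entries zero. Then for every real t, the (0,N) entry of e^{tA} equals 1 − ∑_{m=0}^{N-1} t^m e^{−t} / m!. -/
open NormedSpace

-- helper: sum of indicator over Fin (N+1)
lemma aux_sum_ite_coe (N c : ℕ) (hc : c < N + 1) (x : ℝ) :
    ∑ j : Fin (N + 1), (if (j : ℕ) = c then x else 0) = x := by
  rw [Finset.sum_eq_single (⟨c, hc⟩ : Fin (N + 1))]
  · simp
  · intro b _ hb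
    rw [if_neg]
    intro h
    exact hb (Fin.ext h)
  · simp

-- powers of the shift matrix
lemma aux_shift_pow (N : ℕ) (S : Matrix (Fin (N + 1)) (Fin (N + 1)) ℝ)
    (hS : ∀ i j, S i j = if (j : ℕ) = (i : ℕ) + 1 then 1 else 0) :
    ∀ (n : ℕ) (i j : Fin (N + 1)), (S ^ n) i j = if (j : ℕ) = (i : ℕ) + n then 1 else 0 := by
  intro n
  induction n with
  | zero =>
    intro i j
    simp [Matrix.one_apply, Fin.ext_iff, eq_comm]
  | succ n ih =>
    intro i j
    rw [pow_succ, Matrix.mul_apply]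
    by_cases hj : (j : ℕ) = (i : ℕ) + (n + 1)
    · rw [if_pos hj]
      have hin : (i : ℕ) + n < N + 1 := by
        have := j.isLt; omega
      rw [Finset.sum_eq_single (⟨(i : ℕ) + n, hin⟩ : Fin (N + 1))]
      · rw [ih, hS]
        simp [hj]
        omega
      · intro b _ hb
        rw [ih]
        rw [if_neg, zero_mul]
        intro h
        exact hb (Fin.ext h)
      · simp
    · rw [if_neg hj]
      apply Finset.sum_eq_zero
      intro k _
      rw [ih, hS]
      by_cases h1 : (k : ℕ) = (i : ℕ) + n
      · rw [if_pos h1, if_neg (by omega), mul_zero]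
      · rw [if_neg h1, zero_mul]

-- powers agree on columns < N
lemma aux_pow_eq (N : ℕ) (X Y : Matrix (Fin (N + 1)) (Fin (N + 1)) ℝ)
    (hcol : ∀ k j : Fin (N + 1), (j : ℕ) < N → X k j = Y k j)
    (hlast : ∀ j : Fin (N + 1), (j : ℕ) < N → X (Fin.last N) j = 0) :
    ∀ (n : ℕ) (i j : Fin (N + 1)), (j : ℕ) < N → (X ^ n) i j = (Y ^ n) i j := by
  intro n
  induction n with
  | zero => intro i j _; simp
  | succ n ih =>
    intro i j hj
    rw [pow_succ, pow_succ, Matrix.mul_apply, Matrix.mul_apply]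
    refine Finset.sum_congr rfl fun k _ => ?_
    by_cases hk : (k : ℕ) < N
    · rw [ih i k hk, hcol k j hj]
    · have hk' : k = Fin.last N := by
        have := k.isLt
        exact Fin.ext (by simp [Fin.last]; omega)
      subst hk'
      rw [← hcol _ j hj, hlast j hj, mul_zero, mul_zero]

-- row sums of powers vanish
lemma aux_rowsum_pow (N : ℕ) (X : Matrix (Fin (N + 1)) (Fin (N + 1)) ℝ)
    (hX : ∀ i, ∑ j, X i j = 0) (n : ℕ) (hn : 1 ≤ n) (i : Fin (N + 1)) :
    ∑ j, (X ^ n) i j = 0 := by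
  obtain ⟨m, rfl⟩ := Nat.exists_eq_add_of_le hn
  rw [add_comm 1 m, pow_succ]
  simp only [Matrix.mul_apply]
  rw [Finset.sum_comm]
  apply Finset.sum_eq_zero
  intro k _
  rw [← Finset.mul_sum, hX, mul_zero]

theorem exp_last_entry_of_bidiagonal (N : ℕ) (A : Matrix (Fin (N + 1)) (Fin (N + 1)) ℝ)
    (hA : ∀ i j : Fin (N + 1),
      A i j = if (i : ℕ) < N ∧ (j : ℕ) = (i : ℕ) then -1
        else if (i : ℕ) < N ∧ (j : ℕ) = (i : ℕ) + 1 then 1 else 0) :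
    ∀ t : ℝ,
      (exp (t • A)) 0 (Fin.last N) =
        1 - ∑ m ∈ Finset.range N, t ^ m * Real.exp (-t) / (Nat.factorial m) := by
  intro t
  letI : NormedRing (Matrix (Fin (N + 1)) (Fin (N + 1)) ℝ) := Matrix.linftyOpNormedRing
  letI : NormedAlgebra ℝ (Matrix (Fin (N + 1)) (Fin (N + 1)) ℝ) := Matrix.linftyOpNormedAlgebra
  -- entry evaluation as a continuous linear map
  have entryCLM : ∀ i j : Fin (N + 1),
      ∃ E : Matrix (Fin (N + 1)) (Fin (N + 1)) ℝ →L[ℝ] ℝ, ∀ X, E X = X i j := by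
    intro i j
    let E : Matrix (Fin (N + 1)) (Fin (N + 1)) ℝ →ₗ[ℝ] ℝ :=
      { toFun := fun X => X i j
        map_add' := fun _ _ => rfl
        map_smul' := fun _ _ => rfl }
    exact ⟨⟨E, LinearMap.continuous_of_finiteDimensional E⟩, fun _ => rfl⟩
  have hentry : ∀ (X : Matrix (Fin (N + 1)) (Fin (N + 1)) ℝ) (i j : Fin (N + 1)),
      exp X i j = ∑' n : ℕ, ((n.factorial : ℝ))⁻¹ * (X ^ n) i j := by
    intro X i j
    obtain ⟨E, hE⟩ := entryCLM i j
    calc exp X i j = E (exp X) := (hE _).symm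
      _ = ∑' n : ℕ, E (((n.factorial : ℝ))⁻¹ • X ^ n) := by
          rw [exp_eq_tsum ℝ, E.map_tsum (expSeries_summable' (𝕂 := ℝ) X)]
      _ = _ := tsum_congr fun n => by rw [hE]; simp [Matrix.smul_apply]
  have hsummable : ∀ (X : Matrix (Fin (N + 1)) (Fin (N + 1)) ℝ) (i j : Fin (N + 1)),
      Summable fun n : ℕ => ((n.factorial : ℝ))⁻¹ * (X ^ n) i j := by
    intro X i j
    obtain ⟨E, hE⟩ := entryCLM i j
    have := (expSeries_summable' (𝕂 := ℝ) X).map E.toLinearMap.toAddMonoidHom E.continuous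
    refine this.congr fun n => ?_
    show E ((n.factorial : ℝ)⁻¹ • X ^ n) = _
    rw [hE]
    simp [Matrix.smul_apply]
  -- the comparison matrices
  set S : Matrix (Fin (N + 1)) (Fin (N + 1)) ℝ :=
    Matrix.of fun i j => if (j : ℕ) = (i : ℕ) + 1 then 1 else 0 with hSdef
  set B : Matrix (Fin (N + 1)) (Fin (N + 1)) ℝ :=
    Matrix.of fun i j => if (j : ℕ) = (i : ℕ) then -1
      else if (j : ℕ) = (i : ℕ) + 1 then 1 else 0 with hBdef
  have hS : ∀ i j, S i j = if (j : ℕ) = (i : ℕ) + 1 then 1 else 0 := fun _ _ => rfl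
  have hB : ∀ i j, B i j = if (j : ℕ) = (i : ℕ) then -1
      else if (j : ℕ) = (i : ℕ) + 1 then 1 else 0 := fun _ _ => rfl
  have hBS : B = (-1) + S := by
    ext i j
    rw [Matrix.add_apply, Matrix.neg_apply, Matrix.one_apply, hB i j, hS i j]
    have hij : (i = j) ↔ ((j : ℕ) = (i : ℕ)) := by rw [Fin.ext_iff]; omega
    simp only [hij]
    split_ifs <;> first | (exfalso; omega) | norm_num
  have htB : t • B = (-t) • (1 : Matrix (Fin (N + 1)) (Fin (N + 1)) ℝ) + t • S := by
    rw [hBS]; module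
  have hcomm : Commute ((-t) • (1 : Matrix (Fin (N + 1)) (Fin (N + 1)) ℝ)) (t • S) :=
    (Commute.one_left (t • S)).smul_left (-t)
  have hexpB : exp (t • B) = Real.exp (-t) • exp (t • S) := by
    rw [htB, Matrix.exp_add_of_commute _ _ hcomm]
    rw [← Algebra.algebraMap_eq_smul_one (A := Matrix (Fin (N + 1)) (Fin (N + 1)) ℝ) (-t)]
    have := algebraMap_exp_comm (𝕂 := ℝ) (𝔸 := Matrix (Fin (N + 1)) (Fin (N + 1)) ℝ) (-t)
    erw [← this]
    rw [← Real.exp_eq_exp_ℝ, Algebra.algebraMap_eq_smul_one,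
      smul_mul_assoc, one_mul]
  have hexpS : ∀ j : Fin (N + 1), exp (t • S) 0 j = t ^ (j : ℕ) / (j : ℕ).factorial := by
    intro j
    rw [hentry]
    rw [tsum_eq_single (j : ℕ) ?_]
    · rw [smul_pow, Matrix.smul_apply, aux_shift_pow N S hS, if_pos (by simp), smul_eq_mul]
      field_simp
    · intro n hn
      rw [smul_pow, Matrix.smul_apply, aux_shift_pow N S hS,
        if_neg (by simp; omega), smul_zero, mul_zero]
  have hcol : ∀ k j : Fin (N + 1), (j : ℕ) < N → (t • A) k j = (t • B) k j := by
    intro k j hj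
    have hk := k.isLt
    simp only [Matrix.smul_apply, smul_eq_mul, hA, hB]
    split_ifs <;> first | (exfalso; omega) | rfl
  have hlast : ∀ j : Fin (N + 1), (j : ℕ) < N → (t • A) (Fin.last N) j = 0 := by
    intro j hj
    simp [Matrix.smul_apply, hA, Fin.val_last]
  have hAB : ∀ j : Fin (N + 1), (j : ℕ) < N →
      exp (t • A) 0 j = t ^ (j : ℕ) * Real.exp (-t) / (j : ℕ).factorial := by
    intro j hj
    rw [hentry]
    calc ∑' n : ℕ, ((n.factorial : ℝ))⁻¹ * ((t • A) ^ n) 0 j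
        = ∑' n : ℕ, ((n.factorial : ℝ))⁻¹ * ((t • B) ^ n) 0 j :=
          tsum_congr fun n => by rw [aux_pow_eq N (t • A) (t • B) hcol hlast n 0 j hj]
      _ = exp (t • B) 0 j := (hentry _ _ _).symm
      _ = Real.exp (-t) * (t ^ (j : ℕ) / (j : ℕ).factorial) := by
          rw [hexpB, Matrix.smul_apply, smul_eq_mul, hexpS]
      _ = _ := by ring
  have hrowA : ∀ i, ∑ j, (t • A) i j = 0 := by
    intro i
    have hi2 := i.isLt
    by_cases hi : (i : ℕ) < N
    · have hptw : ∀ j : Fin (N + 1), (t • A) i j =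
          (if (j : ℕ) = (i : ℕ) then (-t) else 0) + (if (j : ℕ) = (i : ℕ) + 1 then t else 0) := by
        intro j
        simp only [Matrix.smul_apply, smul_eq_mul, hA]
        split_ifs <;> first | (exfalso; omega) | ring1
      rw [Finset.sum_congr rfl fun j _ => hptw j, Finset.sum_add_distrib,
        aux_sum_ite_coe N (i : ℕ) (by omega) (-t), aux_sum_ite_coe N ((i : ℕ) + 1) (by omega) t]
      ring
    · apply Finset.sum_eq_zero
      intro j _
      simp only [Matrix.smul_apply, smul_eq_mul, hA]
      split_ifs <;> first | (exfalso; omega) | ring1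
  have hsum1 : ∑ j, exp (t • A) 0 j = 1 := by
    rw [Finset.sum_congr rfl fun j _ => hentry (t • A) 0 j]
    rw [← Summable.tsum_finsetSum (fun j _ => hsummable (t • A) 0 j)]
    rw [tsum_eq_single 0 ?_]
    · simp [Matrix.one_apply]
    · intro n hn
      rw [← Finset.mul_sum,
        aux_rowsum_pow N (t • A) hrowA n (Nat.one_le_iff_ne_zero.mpr hn) 0, mul_zero]
  rw [Fin.sum_univ_castSucc] at hsum1
  have hcast : ∀ i : Fin N, exp (t • A) 0 (Fin.castSucc i)
      = t ^ (i : ℕ) * Real.exp (-t) / (i : ℕ).factorial :=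
    fun i => by rw [hAB (Fin.castSucc i) (by simp), Fin.coe_castSucc]
  rw [Finset.sum_congr rfl fun i _ => hcast i] at hsum1
  have hfinal : exp (t • A) 0 (Fin.last N)
      = 1 - ∑ i : Fin N, t ^ (i : ℕ) * Real.exp (-t) / (i : ℕ).factorial := by linarith
  have h2 : ∑ i : Fin N, t ^ (i : ℕ) * Real.exp (-t) / ((i : ℕ).factorial : ℝ)
      = ∑ m ∈ Finset.range N, t ^ m * Real.exp (-t) / (m.factorial : ℝ) :=
    Fin.sum_univ_eq_sum_range (fun m => t ^ m * Real.exp (-t) / (m.factorial : ℝ)) N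
  exact hfinal.trans (by rw [h2])
end

section
/- For all real numbers a > 0, a' > 0, and t > 0, (1 − e^{−4at})·(1 + e^{−4at} − 2e^{−2(a+a')t}) ≥ (4aa'/(a+a')²)·(1 − e^{−2(a+a')t})². -/
lemma aux1 (w : ℝ) : w * Real.exp (-w) ≤ 1 - Real.exp (-w) := by
  have h := Real.add_one_le_exp w
  have hp := Real.exp_pos (-w)
  have he : Real.exp w * Real.exp (-w) = 1 := by
    rw [← Real.exp_add]; simp
  nlinarith

lemma key_s9 (u v : ℝ) (hu : 0 < u) (hv : 0 < v) :
    (u + v) ^ 2 * Real.exp (-u) ^ 2 * (Real.exp (-u) - Real.exp (-v)) ^ 2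
      ≤ (u - v) ^ 2 * (1 - Real.exp (-u) * Real.exp (-v)) ^ 2 := by
  set x := Real.exp (-u) with hx
  set y := Real.exp (-v) with hy
  have hxpos : 0 < x := Real.exp_pos _
  have hypos : 0 < y := Real.exp_pos _
  have hxy : x * y = Real.exp (-(u + v)) := by rw [hx, hy, ← Real.exp_add]; ring_nf
  have hs : (u + v) * (x * y) ≤ 1 - x * y := by rw [hxy]; exact aux1 (u + v)
  rcases le_total v u with h | h
  · -- u ≥ v, so x ≤ y
    have hid : y * Real.exp (-(u - v)) = x := by rw [hx, hy, ← Real.exp_add]; ring_nf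
    have h1 : y - x ≤ (u - v) * y := by
      have := Real.add_one_le_exp (-(u - v))
      nlinarith [hypos]
    have hxley : x ≤ y := by
      rw [hx, hy]
      exact Real.exp_le_exp.mpr (by linarith)
    have hA : 0 ≤ (u + v) * x * (y - x) := by
      apply mul_nonneg
      · positivity
      · linarith
    have hAB : (u + v) * x * (y - x) ≤ (u - v) * (1 - x * y) := by
      nlinarith [mul_le_mul_of_nonneg_left h1 (le_of_lt (mul_pos (by linarith : (0:ℝ) < u + v) hxpos)),
        mul_le_mul_of_nonneg_left hs (by linarith : (0:ℝ) ≤ u - v)]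
    nlinarith [mul_self_le_mul_self hA hAB]
  · -- v ≥ u, so y ≤ x
    have hid : x * Real.exp (-(v - u)) = y := by rw [hx, hy, ← Real.exp_add]; ring_nf
    have h1 : x - y ≤ (v - u) * x := by
      have := Real.add_one_le_exp (-(v - u))
      nlinarith [hxpos]
    have hx2 : x ^ 2 = Real.exp (-(2 * u)) := by rw [hx, sq, ← Real.exp_add]; ring_nf
    have h2 : 2 * u * x ^ 2 ≤ 1 - x ^ 2 := by rw [hx2]; exact aux1 (2 * u)
    have hylex : y ≤ x := by
      rw [hx, hy]
      exact Real.exp_le_exp.mpr (by linarith)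
    have hA : 0 ≤ (u + v) * x * (x - y) := by
      apply mul_nonneg
      · positivity
      · linarith
    have hAB : (u + v) * x * (x - y) ≤ (v - u) * (1 - x * y) := by
      nlinarith [mul_le_mul_of_nonneg_left h2 (by linarith : (0:ℝ) ≤ v - u),
        mul_le_mul_of_nonneg_left h1 (by positivity : (0:ℝ) ≤ 2 * u * x)]
    nlinarith [mul_self_le_mul_self hA hAB]

theorem lindblad_coefficient_ineq (a a' t : ℝ) (ha : 0 < a) (ha' : 0 < a') (ht : 0 < t) :
    (1 - Real.exp (-4 * a * t)) * (1 + Real.exp (-4 * a * t) - 2 * Real.exp (-2 * (a + a') * t))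
      ≥ (4 * a * a' / (a + a') ^ 2) * (1 - Real.exp (-2 * (a + a') * t)) ^ 2 := by
  have hX : Real.exp (-4 * a * t) = Real.exp (-(2 * a * t)) * Real.exp (-(2 * a * t)) := by
    rw [← Real.exp_add]; ring_nf
  have hXY : Real.exp (-2 * (a + a') * t)
      = Real.exp (-(2 * a * t)) * Real.exp (-(2 * a' * t)) := by
    rw [← Real.exp_add]; ring_nf
  rw [hX, hXY]
  set X := Real.exp (-(2 * a * t)) with hXdef
  set Y := Real.exp (-(2 * a' * t)) with hYdef
  have hkey := key_s9 (2 * a * t) (2 * a' * t) (by positivity) (by positivity)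
  have ht2 : (0:ℝ) < t ^ 2 := by positivity
  have h2 : (a + a') ^ 2 * X ^ 2 * (X - Y) ^ 2 ≤ (a - a') ^ 2 * (1 - X * Y) ^ 2 := by
    nlinarith [hkey, ht2]
  rw [ge_iff_le, div_mul_eq_mul_div, div_le_iff₀ (by positivity)]
  nlinarith [h2]
end

section
/- Let V be a complex matrix with ‖V†V − I‖ ≤ ε, and let H := [[0, V],[V†, 0]] be the associated Hermitian block matrix. Then ‖H³ − H‖ ≤ ε·‖V‖. -/
open scoped Matrix Matrix.Norms.L2Operator

lemma off_block_l2_opNorm_le (N : ℕ) (A B : Matrix (Fin N) (Fin N) ℂ) :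
    ‖Matrix.fromBlocks 0 A B 0‖ ≤ max ‖A‖ ‖B‖ := by
  have hC : (0 : ℝ) ≤ max ‖A‖ ‖B‖ := le_max_of_le_left (norm_nonneg A)
  rw [Matrix.l2_opNorm_def]
  refine ContinuousLinearMap.opNorm_le_bound _ hC fun x => ?_
  set x₁ : EuclideanSpace ℂ (Fin N) := (WithLp.equiv 2 _).symm (fun i => x (Sum.inl i)) with hx₁
  set x₂ : EuclideanSpace ℂ (Fin N) := (WithLp.equiv 2 _).symm (fun i => x (Sum.inr i)) with hx₂
  have hxsum : (WithLp.equiv 2 _ x : (Fin N ⊕ Fin N) → ℂ) =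
      Sum.elim (WithLp.equiv 2 _ x₁) (WithLp.equiv 2 _ x₂) := by
    funext j; cases j <;> rfl
  have happ : ((Matrix.toEuclideanLin.trans LinearMap.toContinuousLinearMap)
        (Matrix.fromBlocks 0 A B 0)) x =
      (WithLp.equiv 2 ((Fin N ⊕ Fin N) → ℂ)).symm
        (Sum.elim (A *ᵥ (WithLp.equiv 2 _ x₂)) (B *ᵥ (WithLp.equiv 2 _ x₁))) := by
    show Matrix.toEuclideanLin (Matrix.fromBlocks 0 A B 0) x = _
    rw [Matrix.toEuclideanLin_apply, (show x.ofLp = _ from hxsum), Matrix.fromBlocks_mulVec]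
    simp
  rw [happ]
  have hx_sq : ‖x‖ ^ 2 = ‖x₁‖ ^ 2 + ‖x₂‖ ^ 2 := by
    simp only [EuclideanSpace.norm_eq]
    rw [Real.sq_sqrt (by positivity), Real.sq_sqrt (by positivity),
      Real.sq_sqrt (by positivity), Fintype.sum_sum_type]
    rfl
  have hlhs_sq : ‖(WithLp.equiv 2 ((Fin N ⊕ Fin N) → ℂ)).symm
        (Sum.elim (A *ᵥ (WithLp.equiv 2 _ x₂)) (B *ᵥ (WithLp.equiv 2 _ x₁)))‖ ^ 2 =
      ‖(WithLp.equiv 2 ((Fin N) → ℂ)).symm (A *ᵥ (WithLp.equiv 2 _ x₂))‖ ^ 2 +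
      ‖(WithLp.equiv 2 ((Fin N) → ℂ)).symm (B *ᵥ (WithLp.equiv 2 _ x₁))‖ ^ 2 := by
    simp only [EuclideanSpace.norm_eq]
    rw [Real.sq_sqrt (by positivity), Real.sq_sqrt (by positivity),
      Real.sq_sqrt (by positivity), Fintype.sum_sum_type]
    rfl
  have hA := Matrix.l2_opNorm_mulVec A x₂
  have hB := Matrix.l2_opNorm_mulVec B x₁
  have key : ‖(WithLp.equiv 2 ((Fin N ⊕ Fin N) → ℂ)).symm
        (Sum.elim (A *ᵥ (WithLp.equiv 2 _ x₂)) (B *ᵥ (WithLp.equiv 2 _ x₁)))‖ ^ 2 ≤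
      (max ‖A‖ ‖B‖ * ‖x‖) ^ 2 := by
    rw [hlhs_sq, mul_pow, hx_sq, mul_add]
    have h1 : ‖(WithLp.equiv 2 ((Fin N) → ℂ)).symm (A *ᵥ (WithLp.equiv 2 _ x₂))‖ ^ 2 ≤
        max ‖A‖ ‖B‖ ^ 2 * ‖x₂‖ ^ 2 := by
      calc _ ≤ (‖A‖ * ‖x₂‖) ^ 2 := by
              apply pow_le_pow_left₀ (norm_nonneg _)
              exact hA
        _ ≤ max ‖A‖ ‖B‖ ^ 2 * ‖x₂‖ ^ 2 := by
              rw [mul_pow]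
              gcongr
              exact le_max_left _ _
    have h2 : ‖(WithLp.equiv 2 ((Fin N) → ℂ)).symm (B *ᵥ (WithLp.equiv 2 _ x₁))‖ ^ 2 ≤
        max ‖A‖ ‖B‖ ^ 2 * ‖x₁‖ ^ 2 := by
      calc _ ≤ (‖B‖ * ‖x₁‖) ^ 2 := by
              apply pow_le_pow_left₀ (norm_nonneg _)
              exact hB
        _ ≤ max ‖A‖ ‖B‖ ^ 2 * ‖x₁‖ ^ 2 := by
              rw [mul_pow]
              gcongr
              exact le_max_right _ _
    linarith
  calc ‖(WithLp.equiv 2 ((Fin N ⊕ Fin N) → ℂ)).symm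
        (Sum.elim (A *ᵥ (WithLp.equiv 2 _ x₂)) (B *ᵥ (WithLp.equiv 2 _ x₁)))‖
      = Real.sqrt (‖(WithLp.equiv 2 ((Fin N ⊕ Fin N) → ℂ)).symm
        (Sum.elim (A *ᵥ (WithLp.equiv 2 _ x₂)) (B *ᵥ (WithLp.equiv 2 _ x₁)))‖ ^ 2) :=
        (Real.sqrt_sq (norm_nonneg _)).symm
    _ ≤ Real.sqrt ((max ‖A‖ ‖B‖ * ‖x‖) ^ 2) := Real.sqrt_le_sqrt key
    _ = max ‖A‖ ‖B‖ * ‖x‖ := Real.sqrt_sq (by positivity)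

theorem block_hamiltonian_cube_close_to_self
    (N : ℕ) (V : Matrix (Fin N) (Fin N) ℂ) (ε : ℝ)
    (h : ‖Vᴴ * V - 1‖ ≤ ε) :
    ‖(Matrix.fromBlocks 0 V Vᴴ 0) ^ 3 - Matrix.fromBlocks 0 V Vᴴ 0‖ ≤ ε * ‖V‖ := by
  have hε : (0 : ℝ) ≤ ε := le_trans (norm_nonneg _) h
  have e1 : V * (Vᴴ * V - 1) = V * Vᴴ * V - V := by
    rw [Matrix.mul_sub, Matrix.mul_one, Matrix.mul_assoc]
  have e2 : (Vᴴ * V - 1) * Vᴴ = Vᴴ * V * Vᴴ - Vᴴ := by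
    rw [Matrix.sub_mul, Matrix.one_mul]
  have hcube : (Matrix.fromBlocks 0 V Vᴴ 0) ^ 3 - Matrix.fromBlocks 0 V Vᴴ 0 =
      Matrix.fromBlocks 0 (V * (Vᴴ * V - 1)) ((Vᴴ * V - 1) * Vᴴ) 0 := by
    rw [e1, e2, pow_succ, pow_two, Matrix.fromBlocks_multiply, Matrix.fromBlocks_multiply,
      sub_eq_add_neg, Matrix.fromBlocks_neg, Matrix.fromBlocks_add]
    congr 1 <;> noncomm_ring
  rw [hcube]
  calc ‖Matrix.fromBlocks 0 (V * (Vᴴ * V - 1)) ((Vᴴ * V - 1) * Vᴴ) 0‖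
      ≤ max ‖V * (Vᴴ * V - 1)‖ ‖(Vᴴ * V - 1) * Vᴴ‖ := off_block_l2_opNorm_le N _ _
    _ ≤ ε * ‖V‖ := by
        apply max_le
        · calc ‖V * (Vᴴ * V - 1)‖ ≤ ‖V‖ * ‖Vᴴ * V - 1‖ := Matrix.l2_opNorm_mul _ _
            _ ≤ ‖V‖ * ε := by gcongr
            _ = ε * ‖V‖ := mul_comm _ _
        · calc ‖(Vᴴ * V - 1) * Vᴴ‖ ≤ ‖Vᴴ * V - 1‖ * ‖Vᴴ‖ := Matrix.l2_opNorm_mul _ _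
            _ ≤ ε * ‖Vᴴ‖ := by gcongr
            _ = ε * ‖V‖ := by rw [Matrix.l2_opNorm_conjTranspose]
end

section
/- Let {b_{mm'}}_{m,m'∈[N]} be complex numbers with ∑_{m,m'} |b_{mm'}|² = 1, and let {l_m}_{m∈[N]} be real numbers with 0 ≤ l_m ≤ δ for all m. Then the trace norm of the N²×N² matrix X := ∑_{m,m',n,n'} b_{mm'} b*_{nn'} (l_m − l_n)² |m⟩⟨n| ⊗ |m'⟩⟨n'| is at most 4δ². -/
open scoped Matrix
open Finset

private lemma sum_conj_mul_outer {α : Type*} [Fintype α] (e f g : α → ℂ) :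
    ∑ p, (starRingEnd ℂ) (e p) * ∑ q, (f p * (starRingEnd ℂ) (g q)) * e q
      = (∑ p, (starRingEnd ℂ) (e p) * f p) *
        (starRingEnd ℂ) (∑ q, (starRingEnd ℂ) (e q) * g q) := by
  have h1 : ∀ p, (starRingEnd ℂ) (e p) * ∑ q, (f p * (starRingEnd ℂ) (g q)) * e q
      = ∑ q, ((starRingEnd ℂ) (e p) * f p) * ((starRingEnd ℂ) (g q) * e q) := by
    intro p
    rw [Finset.mul_sum]
    exact Finset.sum_congr rfl fun q _ => by ring
  simp_rw [h1]
  rw [← Finset.sum_mul_sum]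
  congr 1
  rw [map_sum]
  exact Finset.sum_congr rfl fun q _ => by
    rw [map_mul, Complex.conj_conj]; ring

theorem trace_norm_bound_for_error_matrix
    (N : ℕ) (b : Fin N → Fin N → ℂ) (l : Fin N → ℝ) (δ : ℝ)
    (hb : ∑ m, ∑ m', ‖b m m'‖ ^ 2 = 1)
    (hl : ∀ m, 0 ≤ l m ∧ l m ≤ δ)
    (X : Matrix (Fin N × Fin N) (Fin N × Fin N) ℂ)
    (hXdef : ∀ p q : Fin N × Fin N,
      X p q = b p.1 p.2 * (starRingEnd ℂ) (b q.1 q.2) * (((l p.1 - l q.1) ^ 2 : ℝ) : ℂ))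
    (hX : X.IsHermitian) :
    (∑ i, |hX.eigenvalues i|) ≤ 4 * δ ^ 2 := by
  rcases Nat.eq_zero_or_pos N with hN | hN
  · subst hN
    simp at hb
  obtain ⟨m0⟩ : Nonempty (Fin N) := ⟨⟨0, hN⟩⟩
  have hδ : 0 ≤ δ := le_trans (hl m0).1 (hl m0).2
  -- the three vectors
  set v : EuclideanSpace ℂ (Fin N × Fin N) := WithLp.toLp 2 (fun p : Fin N × Fin N => ((l p.1 : ℂ))^2 * b p.1 p.2) with hv
  set w : EuclideanSpace ℂ (Fin N × Fin N) := WithLp.toLp 2 (fun p : Fin N × Fin N => b p.1 p.2) with hw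
  set u : EuclideanSpace ℂ (Fin N × Fin N) := WithLp.toLp 2 (fun p : Fin N × Fin N => (l p.1 : ℂ) * b p.1 p.2) with hu
  have hdecomp : ∀ p q, X p q
      = v p * (starRingEnd ℂ) (w q) + w p * (starRingEnd ℂ) (v q)
        - 2 * (u p * (starRingEnd ℂ) (u q)) := by
    intro p q
    rw [hXdef]
    simp only [hv, hw, hu, PiLp.toLp_apply, map_mul, ← Complex.ofReal_pow, Complex.conj_ofReal]
    push_cast
    ring
  set e : (Fin N × Fin N) → EuclideanSpace ℂ (Fin N × Fin N) :=
    fun i => hX.eigenvectorBasis i with he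
  set c : ((Fin N × Fin N) → ℂ) → (Fin N × Fin N) → ℂ :=
    fun f i => ∑ p, (starRingEnd ℂ) (e i p) * f p with hc
  -- expression for the eigenvalues
  have hdot : ∀ i, star (e i) ⬝ᵥ (X *ᵥ e i)
      = c v i * (starRingEnd ℂ) (c w i) + c w i * (starRingEnd ℂ) (c v i)
        - 2 * (c u i * (starRingEnd ℂ) (c u i)) := by
    intro i
    have hsplit : ∀ p, ∑ q, X p q * e i q
        = (∑ q, (v p * (starRingEnd ℂ) (w q)) * e i q)
          + (∑ q, (w p * (starRingEnd ℂ) (v q)) * e i q)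
          - ∑ q, (2 * (u p * (starRingEnd ℂ) (u q))) * e i q := by
      intro p
      rw [← Finset.sum_add_distrib, ← Finset.sum_sub_distrib]
      exact Finset.sum_congr rfl fun q _ => by rw [hdecomp]; ring
    simp only [dotProduct, Matrix.mulVec, Pi.star_apply, RCLike.star_def]
    calc ∑ p, (starRingEnd ℂ) (e i p) * ∑ q, X p q * e i q
        = (∑ p, (starRingEnd ℂ) (e i p) * ∑ q, (v p * (starRingEnd ℂ) (w q)) * e i q)
          + (∑ p, (starRingEnd ℂ) (e i p) * ∑ q, (w p * (starRingEnd ℂ) (v q)) * e i q)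
          - 2 * ∑ p, (starRingEnd ℂ) (e i p) * ∑ q, (u p * (starRingEnd ℂ) (u q)) * e i q := by
          simp only [Finset.mul_sum]
          rw [← Finset.sum_add_distrib, ← Finset.sum_sub_distrib]
          refine Finset.sum_congr rfl fun p _ => ?_
          rw [← Finset.sum_add_distrib, ← Finset.sum_sub_distrib]
          refine Finset.sum_congr rfl fun q _ => ?_
          rw [hdecomp]; ring
      _ = _ := by
          rw [sum_conj_mul_outer, sum_conj_mul_outer, sum_conj_mul_outer]
  have heig : ∀ i, hX.eigenvalues i
      = (c v i * (starRingEnd ℂ) (c w i) + c w i * (starRingEnd ℂ) (c v i)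
        - 2 * (c u i * (starRingEnd ℂ) (c u i))).re := by
    intro i
    rw [hX.eigenvalues_eq i, ← hdot i]
    rfl
  have key : ∀ z : ℂ, ((starRingEnd ℂ) z * z).re = ‖z‖ ^ 2 := by
    intro z
    rw [mul_comm, Complex.mul_conj, Complex.ofReal_re]
    exact (Complex.sq_norm z).symm
  -- pointwise bound on eigenvalues
  have habs : ∀ i, |hX.eigenvalues i|
      ≤ 2 * (‖c v i‖ * ‖c w i‖) + 2 * ‖c u i‖ ^ 2 := by
    intro i
    rw [heig i]
    have h1 : |(c v i * (starRingEnd ℂ) (c w i) + c w i * (starRingEnd ℂ) (c v i)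
        - 2 * (c u i * (starRingEnd ℂ) (c u i))).re|
        ≤ |(c v i * (starRingEnd ℂ) (c w i)).re| + |(c w i * (starRingEnd ℂ) (c v i)).re|
          + |(2 * (c u i * (starRingEnd ℂ) (c u i))).re| := by
      simp only [Complex.sub_re, Complex.add_re]
      exact (abs_sub _ _).trans (add_le_add_left (abs_add_le _ _) _)
    refine h1.trans ?_
    have h2 : |(c v i * (starRingEnd ℂ) (c w i)).re|
        ≤ ‖c v i‖ * ‖c w i‖ := by
      refine (Complex.abs_re_le_norm _).trans ?_
      rw [norm_mul, Complex.norm_conj]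
    have h3 : |(c w i * (starRingEnd ℂ) (c v i)).re|
        ≤ ‖c v i‖ * ‖c w i‖ := by
      refine (Complex.abs_re_le_norm _).trans ?_
      rw [norm_mul, Complex.norm_conj, mul_comm]
    have h4 : |(2 * (c u i * (starRingEnd ℂ) (c u i))).re| = 2 * ‖c u i‖ ^ 2 := by
      have : (2 * (c u i * (starRingEnd ℂ) (c u i))).re
          = 2 * ((starRingEnd ℂ) (c u i) * c u i).re := by
        rw [mul_comm (c u i)]
        simp [Complex.mul_re]
      rw [this, key]
      exact abs_of_nonneg (by positivity)
    rw [h4]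
    linarith
  -- Parseval
  have hpar : ∀ f : EuclideanSpace ℂ (Fin N × Fin N),
      ∑ i, ‖c f i‖ ^ 2 = ∑ p, ‖f p‖ ^ 2 := by
    intro f
    have h := hX.eigenvectorBasis.sum_inner_mul_inner f f
    have hinner : ∀ i, (inner ℂ (hX.eigenvectorBasis i) f : ℂ) = c f i := by
      intro i
      simp only [hc, he, PiLp.inner_apply, RCLike.inner_apply]
      exact Finset.sum_congr rfl fun x _ => mul_comm _ _
    calc ∑ i, ‖c f i‖ ^ 2
        = ∑ i, ((starRingEnd ℂ) (c f i) * c f i).re :=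
          Finset.sum_congr rfl fun i _ => (key _).symm
      _ = (∑ i, (starRingEnd ℂ) (c f i) * c f i).re := (Complex.re_sum _ _).symm
      _ = (inner ℂ f f : ℂ).re := by
          rw [← h]
          congr 1
          refine Finset.sum_congr rfl fun i _ => ?_
          rw [← hinner i, ← inner_conj_symm f]
      _ = ∑ p, ‖f p‖ ^ 2 := by
          simp only [PiLp.inner_apply, RCLike.inner_apply, Complex.re_sum]
          exact Finset.sum_congr rfl fun p _ => by rw [mul_comm]; exact key _
  -- norms of the vectors
  have hSw : ∑ p : Fin N × Fin N, ‖w p‖ ^ 2 = 1 := by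
    rw [← hb, Fintype.sum_prod_type]
  have hSu : ∑ p : Fin N × Fin N, ‖u p‖ ^ 2 ≤ δ ^ 2 := by
    calc ∑ p : Fin N × Fin N, ‖u p‖ ^ 2
        ≤ ∑ p : Fin N × Fin N, δ ^ 2 * ‖w p‖ ^ 2 := by
          refine Finset.sum_le_sum fun p _ => ?_
          simp only [hu, hw, PiLp.toLp_apply, norm_mul, Complex.norm_real, Real.norm_eq_abs, mul_pow]
          have : |l p.1| ^ 2 ≤ δ ^ 2 := by
            rw [abs_of_nonneg (hl p.1).1]
            exact pow_le_pow_left₀ (hl p.1).1 (hl p.1).2 2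
          exact mul_le_mul_of_nonneg_right this (by positivity)
      _ = δ ^ 2 := by rw [← Finset.mul_sum, hSw, mul_one]
  have hSv : ∑ p : Fin N × Fin N, ‖v p‖ ^ 2 ≤ (δ ^ 2) ^ 2 := by
    calc ∑ p : Fin N × Fin N, ‖v p‖ ^ 2
        ≤ ∑ p : Fin N × Fin N, (δ ^ 2) ^ 2 * ‖w p‖ ^ 2 := by
          refine Finset.sum_le_sum fun p _ => ?_
          simp only [hv, hw, PiLp.toLp_apply, norm_mul, norm_pow, Complex.norm_real, Real.norm_eq_abs, mul_pow]
          have h0 : |l p.1| ^ 2 ≤ δ ^ 2 := by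
            rw [abs_of_nonneg (hl p.1).1]
            exact pow_le_pow_left₀ (hl p.1).1 (hl p.1).2 2
          have h5 : (|l p.1| ^ 2) ^ 2 ≤ (δ ^ 2) ^ 2 :=
            pow_le_pow_left₀ (by positivity) h0 2
          calc (|l p.1| ^ 2) ^ 2 * ‖b p.1 p.2‖ ^ 2
              ≤ (δ ^ 2) ^ 2 * ‖b p.1 p.2‖ ^ 2 :=
              mul_le_mul_of_nonneg_right h5 (by positivity)
            _ = (δ ^ 2) ^ 2 * ‖b p.1 p.2‖ ^ 2 := rfl
      _ = (δ ^ 2) ^ 2 := by rw [← Finset.mul_sum, hSw, mul_one]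
  -- Cauchy-Schwarz
  have hcs : ∑ i, ‖c v i‖ * ‖c w i‖ ≤ δ ^ 2 := by
    have h2 := Finset.sum_mul_sq_le_sq_mul_sq Finset.univ
      (fun i => ‖c v i‖) (fun i => ‖c w i‖)
    rw [hpar v, hpar w, hSw, mul_one] at h2
    refine le_of_pow_le_pow_left₀ two_ne_zero (by positivity) ?_
    exact h2.trans hSv
  have hcu : ∑ i, ‖c u i‖ ^ 2 ≤ δ ^ 2 := by rw [hpar u]; exact hSu
  calc ∑ i, |hX.eigenvalues i|
      ≤ ∑ i, (2 * (‖c v i‖ * ‖c w i‖)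
          + 2 * ‖c u i‖ ^ 2) := Finset.sum_le_sum fun i _ => habs i
    _ = 2 * (∑ i, ‖c v i‖ * ‖c w i‖)
        + 2 * ∑ i, ‖c u i‖ ^ 2 := by
        rw [Finset.sum_add_distrib, Finset.mul_sum, Finset.mul_sum]
    _ ≤ 2 * δ ^ 2 + 2 * δ ^ 2 := by
        have := mul_le_mul_of_nonneg_left hcs (by norm_num : (0:ℝ) ≤ 2)
        have := mul_le_mul_of_nonneg_left hcu (by norm_num : (0:ℝ) ≤ 2)
        linarith [mul_le_mul_of_nonneg_left hcs (by norm_num : (0:ℝ) ≤ 2),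
          mul_le_mul_of_nonneg_left hcu (by norm_num : (0:ℝ) ≤ 2)]
    _ = 4 * δ ^ 2 := by ring
end
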